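/- arXiv:1507.07455 — 2 statements merged into one kernel-verified Lean document; each statement's English description precedes it below -/
import Mathlib

section
/- Let w : (0,∞) → (0,∞) be continuous, decreasing, with w(y) = 1 for y > 1, and satisfying the doubling condition w(y) ≤ D·w(2y) for all y > 0 and some constant D > 0. Then for every θ ∈ (0,1], the integral ∫_θ^1 (w(y)/y) d(1/w(y)) is at most (2 log D)/θ. -/
open MeasureTheory Set

lemma sum_range_mul_aux {M : Type*} [AddCommMonoid M] (f : ℕ → M) (n m : ℕ) :
    ∑ k ∈ Finset.range (n * m), f k
      = ∑ j ∈ Finset.range m, ∑ i ∈ Finset.range n, f (n * j + i) := by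
  induction m with
  | zero => simp
  | succ m ih =>
    rw [Nat.mul_succ, Finset.sum_range_add, ih, Finset.sum_range_succ]

lemma ratio_aux {u v c δ : ℝ} (hv : 0 < v) (hvu : v ≤ u) (huv : u ≤ (1 + δ) * v) (hc : 0 < c) :
    (u / c) * (1 / v - 1 / u) ≤ (1 + δ) * (Real.log u - Real.log v) / c := by
  have hu : 0 < u := lt_of_lt_of_le hv hvu
  have hR0 : 0 < u / v := div_pos hu hv
  have hR1 : 1 ≤ u / v := (one_le_div hv).mpr hvu
  have hRd : u / v ≤ 1 + δ := (div_le_iff₀ hv).mpr huv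
  have hS : 0 ≤ Real.log (u / v) := Real.log_nonneg hR1
  have hlogR : (u / v - 1) / (u / v) ≤ Real.log (u / v) := by
    have h := Real.log_le_sub_one_of_pos (inv_pos.mpr hR0)
    rw [Real.log_inv] at h
    have h2 : 1 - (u / v)⁻¹ ≤ Real.log (u / v) := by linarith
    calc (u / v - 1) / (u / v) = 1 - (u / v)⁻¹ := by field_simp
      _ ≤ _ := h2
  have hkey : u / v - 1 ≤ (1 + δ) * Real.log (u / v) := by
    have h1 : u / v - 1 ≤ Real.log (u / v) * (u / v) := (div_le_iff₀ hR0).mp hlogR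
    have h2 : Real.log (u / v) * (u / v) ≤ Real.log (u / v) * (1 + δ) :=
      mul_le_mul_of_nonneg_left hRd hS
    linarith
  have hLHS : (u / c) * (1 / v - 1 / u) = (u / v - 1) / c := by field_simp
  rw [hLHS, ← Real.log_div hu.ne' hv.ne']
  gcongr

set_option maxHeartbeats 1000000 in
/-- For a continuous decreasing doubling weight `w` (equal to `1` beyond `1`),
the Stieltjes integral `∫_θ^1 (w y / y) d(1/w)` is at most `2 log D / θ`. -/
theorem stmt0 (w : ℝ → ℝ) (D : ℝ) (hD : 0 < D)
    (hw_pos : ∀ y, 0 < y → 0 < w y)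
    (hw_cont : ContinuousOn w (Set.Ioi 0))
    (hw_anti : AntitoneOn w (Set.Ioi 0))
    (hw_one : ∀ y, 1 < y → w y = 1)
    (hw_doub : ∀ y, 0 < y → w y ≤ D * w (2 * y))
    (g : StieltjesFunction ℝ) (hg : ∀ y, 0 < y → g y = 1 / w y)
    (θ : ℝ) (hθ : θ ∈ Set.Ioc (0 : ℝ) 1) :
    ∫ y in Set.Ioc θ 1, w y / y ∂g.measure ≤ 2 * Real.log D / θ := by
  classical
  obtain ⟨hθ0, hθ1⟩ := hθ
  have hD1 : 1 ≤ D := by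
    have h2 := hw_doub 2 (by norm_num)
    rw [hw_one 2 one_lt_two, show (2:ℝ) * 2 = 4 by norm_num, hw_one 4 (by norm_num)] at h2
    linarith
  have hlogD : 0 ≤ Real.log D := Real.log_nonneg hD1
  refine le_of_forall_sub_le fun ε hε => ?_
  rw [sub_le_iff_le_add]
  -- goal : ∫ ... ≤ 2 * Real.log D / θ + ε
  -- choose m with 1 ≤ 2 ^ m * θ
  obtain ⟨m₀, hm₀⟩ := pow_unbounded_of_one_lt (1 / θ) (one_lt_two (α := ℝ))
  set m : ℕ := m₀ + 1 with hm_def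
  have hm1 : (1:ℝ) ≤ 2 ^ m * θ := by
    have h1 : (1:ℝ) / θ < 2 ^ m := lt_of_lt_of_le hm₀ (by
      apply pow_le_pow_right₀ (by norm_num) (by omega))
    rw [div_lt_iff₀ hθ0] at h1
    linarith
  set B : ℝ := 2 ^ m * θ with hB_def
  have hB0 : 0 < B := by positivity
  have h2m : (1:ℝ) ≤ 2 ^ m := by
    have := pow_le_pow_right₀ (show (1:ℝ) ≤ 2 by norm_num) (Nat.zero_le m)
    simpa using this
  have hθB : θ ≤ B := by nlinarith
  have hwB : 0 < w B := hw_pos B hB0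
  -- δ
  set δ : ℝ := ε * θ / (2 * (Real.log D + 1)) with hδ_def
  have hδ0 : 0 < δ := by rw [hδ_def]; positivity
  clear_value δ
  -- uniform continuity on Icc θ B
  have hIcc : Set.Icc θ B ⊆ Set.Ioi 0 := fun x hx => lt_of_lt_of_le hθ0 hx.1
  have hUC : UniformContinuousOn w (Set.Icc θ B) :=
    isCompact_Icc.uniformContinuousOn_of_continuous (hw_cont.mono hIcc)
  obtain ⟨ρ, hρ0, hρ⟩ := Metric.uniformContinuousOn_iff.mp hUC (δ * w B) (by positivity)
  -- choose n
  have ht : Filter.Tendsto (fun n : ℕ => (2:ℝ) ^ ((n:ℝ)⁻¹)) Filter.atTop (nhds 1) := by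
    have h1 : Filter.Tendsto (fun n : ℕ => Real.log 2 * (n:ℝ)⁻¹) Filter.atTop (nhds 0) := by
      simpa using tendsto_inv_atTop_nhds_zero_nat.const_mul (Real.log 2)
    have h2 := (Real.continuous_exp.tendsto 0).comp h1
    simp only [Real.exp_zero] at h2
    refine h2.congr fun n => ?_
    simp [Function.comp, Real.rpow_def_of_pos (show (0:ℝ) < 2 by norm_num)]
  have hev : ∀ᶠ n : ℕ in Filter.atTop, (2:ℝ) ^ ((n:ℝ)⁻¹) < 1 + ρ / B :=
    ht.eventually_lt_const (by linarith [div_pos hρ0 hB0])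
  obtain ⟨n, hn1, hnr⟩ := ((Filter.eventually_ge_atTop 1).and hev).exists
  set r : ℝ := (2:ℝ) ^ ((n:ℝ)⁻¹) with hr_def
  have hn0 : (0:ℝ) < n := by exact_mod_cast hn1
  have hr1 : 1 < r := by
    rw [hr_def]
    rw [Real.one_lt_rpow_iff_of_pos (by norm_num)]
    left; exact ⟨by norm_num, by positivity⟩
  have hr0 : 0 < r := lt_trans one_pos hr1
  have hrn : r ^ n = 2 := by
    rw [hr_def, ← Real.rpow_natCast ((2:ℝ) ^ ((n:ℝ)⁻¹)) n, ← Real.rpow_mul (by norm_num)]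
    rw [inv_mul_cancel₀ (by exact_mod_cast hn0.ne')]
    simp
  have hrρ : (r - 1) * B < ρ := by
    have : r - 1 < ρ / B := by linarith [hnr]
    calc (r - 1) * B < (ρ / B) * B := by
          apply mul_lt_mul_of_pos_right this hB0
      _ = ρ := by field_simp
  -- the points
  set a : ℕ → ℝ := fun k => r ^ k * θ with ha_def
  have ha0 : a 0 = θ := by simp [ha_def]
  have ha_pos : ∀ k, 0 < a k := fun k => by positivity
  have ha_mono : Monotone a := fun k l hkl => by
    apply mul_le_mul_of_nonneg_right _ hθ0.le
    exact pow_le_pow_right₀ hr1.le hkl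
  have ha_succ : ∀ k, a (k + 1) = r * a k := fun k => by
    simp [ha_def, pow_succ]; ring
  have ha_block : ∀ j, a (n * j) = 2 ^ j * θ := fun j => by
    simp only [ha_def, pow_mul, hrn]
  have haB : a (n * m) = B := by rw [ha_block, hB_def]
  have ha_leB : ∀ k, k ≤ n * m → a k ≤ B := fun k hk => haB ▸ ha_mono hk
  have ha_mem : ∀ k, k ≤ n * m → a k ∈ Set.Icc θ B := fun k hk =>
    ⟨ha0 ▸ ha_mono (Nat.zero_le k), ha_leB k hk⟩
  have hwa : ∀ k, 0 < w (a k) := fun k => hw_pos _ (ha_pos k)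
  -- w is antitone along a
  have hwa_anti : ∀ k, w (a (k + 1)) ≤ w (a k) := fun k =>
    hw_anti (ha_pos k) (ha_pos (k+1)) (ha_mono (Nat.le_succ k))
  -- ratio bound
  have hRδ : ∀ k, k < n * m → w (a k) ≤ (1 + δ) * w (a (k + 1)) := by
    intro k hk
    have hk1 : k + 1 ≤ n * m := hk
    have hmem1 := ha_mem k (le_of_lt hk)
    have hmem2 := ha_mem (k+1) hk1
    have hdist : dist (a k) (a (k+1)) < ρ := by
      rw [Real.dist_eq, abs_sub_comm, abs_of_nonneg (by nlinarith [ha_succ k, ha_pos k, hr1])]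
      have : a (k+1) - a k = (r - 1) * a k := by rw [ha_succ k]; ring
      rw [this]
      calc (r - 1) * a k ≤ (r - 1) * B := by
            apply mul_le_mul_of_nonneg_left (ha_leB k hk.le) (by linarith)
        _ < ρ := hrρ
    have hwdist := hρ _ hmem1 _ hmem2 hdist
    rw [Real.dist_eq] at hwdist
    have hwB_le : w B ≤ w (a (k+1)) := hw_anti (hIcc hmem2) (Set.mem_Ioi.mpr hB0) hmem2.2
    have h1 : w (a k) - w (a (k+1)) ≤ δ * w B := le_of_lt (lt_of_le_of_lt (le_abs_self _) hwdist)
    nlinarith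
  -- key pointwise inequality per interval
  set L : ℕ → ℝ := fun k => Real.log (w (a k)) with hL_def
  have hL_diff : ∀ k, 0 ≤ L k - L (k + 1) := by
    intro k
    have := Real.log_le_log (hwa (k+1)) (hwa_anti k)
    simp only [hL_def]; linarith
  set e : ℕ → ℝ := fun k => (1 + δ) * (L k - L (k + 1)) / a k with he_def
  have he_nonneg : ∀ k, 0 ≤ e k := fun k => by
    have := hL_diff k
    have := ha_pos k
    positivity
  have hstep : ∀ k, k < n * m →
      (w (a k) / a k) * (1 / w (a (k + 1)) - 1 / w (a k)) ≤ e k := by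
    intro k hk
    have h := ratio_aux (hwa (k+1)) (hwa_anti k) (hRδ k hk) (ha_pos k)
    simp only [he_def, hL_def]
    exact h
  -- block doubling bound
  have hblock : ∀ j, ∑ i ∈ Finset.range n, (L (n * j + i) - L (n * j + i + 1)) ≤ Real.log D := by
    intro j
    have htel : ∑ i ∈ Finset.range n, ((fun i => L (n * j + i)) i - (fun i => L (n * j + i)) (i+1))
        = L (n * j) - L (n * j + n) := Finset.sum_range_sub' (fun i => L (n * j + i)) n
    have heq : ∀ i, L (n * j + i) - L (n * j + i + 1)
        = (fun i => L (n * j + i)) i - (fun i => L (n * j + i)) (i+1) := by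
      intro i; simp [Nat.add_assoc]
    calc ∑ i ∈ Finset.range n, (L (n * j + i) - L (n * j + i + 1))
        = L (n * j) - L (n * j + n) := by rw [Finset.sum_congr rfl (fun i _ => heq i), htel]
      _ ≤ Real.log D := by
          have h1 : n * j + n = n * (j + 1) := by ring
          rw [h1]
          simp only [hL_def]
          rw [ha_block, ha_block]
          have hp : (0:ℝ) < 2 ^ j * θ := by positivity
          have hp' : (0:ℝ) < 2 ^ (j+1) * θ := by positivity
          have hd := hw_doub (2 ^ j * θ) hp
          have h2 : 2 * (2 ^ j * θ) = 2 ^ (j+1) * θ := by ring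
          rw [h2] at hd
          have hwp : 0 < w (2 ^ (j+1) * θ) := hw_pos _ hp'
          have := Real.log_le_log (hw_pos _ hp) hd
          rw [Real.log_mul hD.ne' hwp.ne'] at this
          linarith
  -- the total sum bound
  have hsum : ∑ k ∈ Finset.range (n * m), e k ≤ (1 + δ) * Real.log D / θ * 2 := by
    rw [sum_range_mul_aux e n m]
    have hinner : ∀ j, j < m → ∑ i ∈ Finset.range n, e (n * j + i)
        ≤ (1 + δ) * Real.log D / θ * (1/2) ^ j := by
      intro j hj
      have h1 : ∀ i, i < n → e (n * j + i)
          ≤ (1 + δ) * (L (n * j + i) - L (n * j + i + 1)) / (2 ^ j * θ) := by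
        intro i hi
        have hge : 2 ^ j * θ ≤ a (n * j + i) := by
          rw [← ha_block j]
          exact ha_mono (Nat.le_add_right _ _)
        have hp : (0:ℝ) < 2 ^ j * θ := by positivity
        apply div_le_div_of_nonneg_left _ hp hge
        have := hL_diff (n * j + i)
        positivity
      calc ∑ i ∈ Finset.range n, e (n * j + i)
          ≤ ∑ i ∈ Finset.range n, (1 + δ) * (L (n * j + i) - L (n * j + i + 1)) / (2 ^ j * θ) :=
            Finset.sum_le_sum (fun i hi => h1 i (Finset.mem_range.mp hi))
        _ = (1 + δ) / (2 ^ j * θ) * ∑ i ∈ Finset.range n, (L (n * j + i) - L (n * j + i + 1)) := by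
            rw [Finset.mul_sum]
            apply Finset.sum_congr rfl
            intro i _
            ring
        _ ≤ (1 + δ) / (2 ^ j * θ) * Real.log D := by
            apply mul_le_mul_of_nonneg_left (hblock j)
            positivity
        _ = (1 + δ) * Real.log D / θ * (1/2) ^ j := by
            rw [div_pow, one_pow, mul_one_div, div_mul_eq_mul_div,
              div_eq_div_iff (by positivity) (by positivity)]
            field_simp
    calc ∑ j ∈ Finset.range m, ∑ i ∈ Finset.range n, e (n * j + i)
        ≤ ∑ j ∈ Finset.range m, (1 + δ) * Real.log D / θ * (1/2) ^ j :=
          Finset.sum_le_sum (fun j hj => hinner j (Finset.mem_range.mp hj))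
      _ = (1 + δ) * Real.log D / θ * ∑ j ∈ Finset.range m, (1/2:ℝ) ^ j := by
          rw [Finset.mul_sum]
      _ ≤ (1 + δ) * Real.log D / θ * 2 := by
          apply mul_le_mul_of_nonneg_left _ (by positivity)
          rw [geom_sum_eq (by norm_num : (1/2:ℝ) ≠ 1) m]
          have hpm : (0:ℝ) ≤ (1/2:ℝ) ^ m := by positivity
          rw [div_le_iff_of_neg (by norm_num : (1/2:ℝ) - 1 < 0)]
          linarith
  -- measure theory part
  set μ := g.measure with hμ_def
  set f : ℝ → ℝ := fun y => w y / y with hf_def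
  have h1 : ∫ y in Set.Ioc θ 1, f y ∂μ
      ≤ (∫⁻ y in Set.Ioc θ 1, ENNReal.ofReal ‖f y‖ ∂μ).toReal :=
    le_trans (Real.le_norm_self _) (norm_integral_le_lintegral_norm _)
  set s : ℕ → Set ℝ := fun k => if k < n * m then Set.Ioc (a k) (a (k + 1)) else ∅ with hs_def
  have hnm1 : 1 ≤ n * m := Nat.one_le_iff_ne_zero.mpr (by positivity)
  have hcover : Set.Ioc θ 1 ⊆ ⋃ k, s k := by
    intro y hy
    obtain ⟨hy1, hy2⟩ := hy
    have hex : ∃ k, y ≤ a (k + 1) := by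
      refine ⟨n * m - 1, ?_⟩
      have : n * m - 1 + 1 = n * m := Nat.succ_pred_eq_of_pos hnm1
      rw [this, haB]
      linarith [hm1]
    have hk_spec : y ≤ a (Nat.find hex + 1) := Nat.find_spec hex
    have hklt : Nat.find hex < n * m := by
      have hle : Nat.find hex ≤ n * m - 1 := Nat.find_le (by
        have : n * m - 1 + 1 = n * m := Nat.succ_pred_eq_of_pos hnm1
        rw [this, haB]; linarith [hm1])
      omega
    have hak : a (Nat.find hex) < y := by
      rcases Nat.eq_zero_or_pos (Nat.find hex) with hk0 | hk0
      · rw [hk0, ha0]; exact hy1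
      · have h := Nat.find_min hex (Nat.sub_lt hk0 one_pos)
        push_neg at h
        have he : Nat.find hex - 1 + 1 = Nat.find hex := Nat.succ_pred_eq_of_pos hk0
        rwa [he] at h
    refine Set.mem_iUnion.mpr ⟨Nat.find hex, ?_⟩
    rw [hs_def]
    simp only [hklt, if_true]
    exact ⟨hak, hk_spec⟩
  have hterm : ∀ k, ∫⁻ y in s k, ENNReal.ofReal ‖f y‖ ∂μ
      ≤ if k < n * m then ENNReal.ofReal (e k) else 0 := by
    intro k
    by_cases hk : k < n * m
    · simp only [hs_def, hk, if_true]
      have hsup : ∀ y ∈ Set.Ioc (a k) (a (k + 1)),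
          ENNReal.ofReal ‖f y‖ ≤ ENNReal.ofReal (w (a k) / a k) := by
        intro y hy
        obtain ⟨hy1, hy2⟩ := hy
        have hy0 : 0 < y := lt_trans (ha_pos k) hy1
        have hwy : 0 < w y := hw_pos y hy0
        apply ENNReal.ofReal_le_ofReal
        simp only [hf_def]
        rw [Real.norm_eq_abs, abs_of_nonneg (by positivity)]
        exact div_le_div₀ (hwa k).le
          (hw_anti (ha_pos k) (Set.mem_Ioi.mpr hy0) hy1.le) (ha_pos k) hy1.le
      calc ∫⁻ y in Set.Ioc (a k) (a (k+1)), ENNReal.ofReal ‖f y‖ ∂μ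
          ≤ ∫⁻ _ in Set.Ioc (a k) (a (k+1)), ENNReal.ofReal (w (a k) / a k) ∂μ :=
            setLIntegral_mono measurable_const hsup
        _ = ENNReal.ofReal (w (a k) / a k) * μ (Set.Ioc (a k) (a (k+1))) :=
            setLIntegral_const _ _
        _ = ENNReal.ofReal (w (a k) / a k) * ENNReal.ofReal (g (a (k+1)) - g (a k)) := by
            rw [hμ_def, StieltjesFunction.measure_Ioc]
        _ = ENNReal.ofReal ((w (a k) / a k) * (g (a (k+1)) - g (a k))) := by
            rw [← ENNReal.ofReal_mul (div_nonneg (hwa k).le (ha_pos k).le)]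
        _ ≤ ENNReal.ofReal (e k) := by
            apply ENNReal.ofReal_le_ofReal
            rw [hg _ (ha_pos (k+1)), hg _ (ha_pos k)]
            exact hstep k hk
    · simp only [hs_def, hk, if_false]
      simp
  have h2 : ∫⁻ y in Set.Ioc θ 1, ENNReal.ofReal ‖f y‖ ∂μ
      ≤ ENNReal.ofReal ((1 + δ) * Real.log D / θ * 2) := by
    calc ∫⁻ y in Set.Ioc θ 1, ENNReal.ofReal ‖f y‖ ∂μ
        ≤ ∫⁻ y in ⋃ k, s k, ENNReal.ofReal ‖f y‖ ∂μ := lintegral_mono_set hcover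
      _ ≤ ∑' k, ∫⁻ y in s k, ENNReal.ofReal ‖f y‖ ∂μ := lintegral_iUnion_le _ _
      _ ≤ ∑' k, if k < n * m then ENNReal.ofReal (e k) else 0 :=
          ENNReal.tsum_le_tsum hterm
      _ = ∑ k ∈ Finset.range (n * m), if k < n * m then ENNReal.ofReal (e k) else 0 :=
          tsum_eq_sum (fun k hk => by
            simp only [Finset.mem_range] at hk
            simp [hk])
      _ = ∑ k ∈ Finset.range (n * m), ENNReal.ofReal (e k) := by
          apply Finset.sum_congr rfl
          intro k hk
          simp [Finset.mem_range.mp hk]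
      _ = ENNReal.ofReal (∑ k ∈ Finset.range (n * m), e k) :=
          (ENNReal.ofReal_sum_of_nonneg (fun k _ => he_nonneg k)).symm
      _ ≤ ENNReal.ofReal ((1 + δ) * Real.log D / θ * 2) := ENNReal.ofReal_le_ofReal hsum
  have h3 : (∫⁻ y in Set.Ioc θ 1, ENNReal.ofReal ‖f y‖ ∂μ).toReal
      ≤ (1 + δ) * Real.log D / θ * 2 :=
    ENNReal.toReal_le_of_le_ofReal (by positivity) h2
  -- final arithmetic
  have hfinal : (1 + δ) * Real.log D / θ * 2 ≤ 2 * Real.log D / θ + ε := by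
    have hδle : δ * (2 * (Real.log D + 1)) = ε * θ := by
      rw [hδ_def]; field_simp
    have h4 : δ * 2 * Real.log D ≤ ε * θ := by nlinarith
    have h5 : (1 + δ) * Real.log D / θ * 2 = 2 * Real.log D / θ + (δ * 2 * Real.log D) / θ := by
      ring
    rw [h5]
    have h6 : (δ * 2 * Real.log D) / θ ≤ ε := by
      rw [div_le_iff₀ hθ0]
      linarith
    linarith
  exact le_trans h1 (le_trans h3 hfinal)
end

section
/- Let P_y(t) = y/(π(y² + t²)) be the Poisson kernel of the upper half-plane and φ : ℝ → ℝ a C¹ function supported in [0,1] with ‖φ‖_∞ ≤ 1 and ∫φ = 0. For j ∈ ℕ, let φ_{j,i}(t) = φ(2^j t − i), i = 0,…,2^j − 1, be the copies of φ on the dyadic intervals of rank j in (0,1]. Then there is an absolute constant C such that for all x ∈ ℝ and y > 0, ∑_{i=0}^{2^j−1} |(φ_{j,i} * P_y)(x)| ≤ C·2^{−j}/y. -/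
open MeasureTheory Set

/-- The Poisson kernel of the upper half-plane, `P_y(t) = y / (π (y² + t²))`. -/
noncomputable def poissonK (y t : ℝ) : ℝ := y / (Real.pi * (y ^ 2 + t ^ 2))

namespace Stmt9Aux

/-- The derivative of the Poisson kernel in `t`. -/
noncomputable def pd (y s : ℝ) : ℝ := (-2) * y * s / (Real.pi * (y ^ 2 + s ^ 2) ^ 2)

lemma denom_pos {y : ℝ} (hy : 0 < y) (s : ℝ) : 0 < Real.pi * (y ^ 2 + s ^ 2) := by
  have := Real.pi_pos
  positivity

lemma poissonK_hasDerivAt {y : ℝ} (hy : 0 < y) (s : ℝ) :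
    HasDerivAt (poissonK y) (pd y s) s := by
  have hd : HasDerivAt (fun s : ℝ => Real.pi * (y ^ 2 + s ^ 2)) (Real.pi * (2 * s)) s := by
    have h1 : HasDerivAt (fun s : ℝ => y ^ 2 + s ^ 2) (2 * s) s := by
      simpa [Nat.cast_ofNat] using ((hasDerivAt_pow 2 s).const_add (y ^ 2))
    simpa using h1.const_mul Real.pi
  have hne : Real.pi * (y ^ 2 + s ^ 2) ≠ 0 := (denom_pos hy s).ne'
  have h : HasDerivAt (poissonK y) _ s := (hasDerivAt_const s y).div hd hne
  convert h using 1
  rw [pd]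
  field_simp
  ring

lemma pd_bound {y : ℝ} (hy : 0 < y) (s : ℝ) :
    |pd y s| ≤ (Real.pi * (y ^ 2 + s ^ 2))⁻¹ := by
  have hπ := Real.pi_pos
  have hd : (0:ℝ) < y ^ 2 + s ^ 2 := by positivity
  have habs : |pd y s| = 2 * y * |s| / (Real.pi * (y ^ 2 + s ^ 2) ^ 2) := by
    rw [pd, abs_div,
      abs_of_pos (show (0:ℝ) < Real.pi * (y ^ 2 + s ^ 2) ^ 2 by positivity), abs_mul, abs_mul]
    norm_num [abs_of_pos hy]
  rw [habs, div_le_iff₀ (by positivity)]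
  have hval : (Real.pi * (y ^ 2 + s ^ 2))⁻¹ * (Real.pi * (y ^ 2 + s ^ 2) ^ 2)
      = y ^ 2 + s ^ 2 := by
    field_simp
  rw [hval]
  nlinarith [sq_nonneg (y - |s|), sq_abs s, abs_nonneg s]

lemma pd_cont {y : ℝ} (hy : 0 < y) : Continuous (pd y) := by
  apply Continuous.div (by continuity) (by continuity)
  intro s
  have := denom_pos hy s
  positivity

lemma poissonK_cont {y : ℝ} (hy : 0 < y) : Continuous (poissonK y) := by
  apply Continuous.div continuous_const (by continuity)
  intro s
  exact (denom_pos hy s).ne'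

lemma integrable_B {y : ℝ} (hy : 0 < y) (x : ℝ) :
    Integrable (fun t : ℝ => (Real.pi * (y ^ 2 + (x - t) ^ 2))⁻¹) := by
  have h1 : ∀ t : ℝ, (Real.pi * (y ^ 2 + (x - t) ^ 2))⁻¹
      = (Real.pi * y ^ 2)⁻¹ * (1 + ((x - t) / y) ^ 2)⁻¹ := by
    intro t
    have hπ := Real.pi_pos
    rw [← mul_inv]
    congr 1
    field_simp
  simp_rw [h1]
  apply Integrable.const_mul
  have k1 : Integrable (fun u : ℝ => (1 + (u / y) ^ 2)⁻¹) :=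
    integrable_inv_one_add_sq.comp_div hy.ne'
  have k2 : Integrable (fun t : ℝ => (1 + ((x - t) / y) ^ 2)⁻¹) := by
    have := k1.comp_sub_left x
    simpa using this
  exact k2

lemma integral_B {y : ℝ} (hy : 0 < y) (x : ℝ) :
    ∫ t : ℝ, (Real.pi * (y ^ 2 + (x - t) ^ 2))⁻¹ = 1 / y := by
  have hπ := Real.pi_pos
  have h1 : ∀ t : ℝ, (Real.pi * (y ^ 2 + (x - t) ^ 2))⁻¹
      = (Real.pi * y ^ 2)⁻¹ * (1 + ((x - t) / y) ^ 2)⁻¹ := by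
    intro t
    rw [← mul_inv]
    congr 1
    field_simp
  simp_rw [h1]
  rw [integral_const_mul]
  have h2 : (∫ t : ℝ, (1 + ((x - t) / y) ^ 2)⁻¹) = ∫ u : ℝ, (1 + (u / y) ^ 2)⁻¹ :=
    integral_sub_left_eq_self (fun u : ℝ => (1 + (u / y) ^ 2)⁻¹) volume x
  rw [h2, MeasureTheory.Measure.integral_comp_div (fun u : ℝ => (1 + u ^ 2)⁻¹) y,
    integral_univ_inv_one_add_sq, abs_of_pos hy, smul_eq_mul]
  field_simp

end Stmt9Aux

open Stmt9Aux in
/-- for `φ ∈ C¹` supported in `[0,1]` with `‖φ‖_∞ ≤ 1` and `∫ φ = 0`, there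
is an absolute constant `C` such that
`∑_{i<2^j} |(φ_{j,i} * P_y)(x)| ≤ C 2^{−j}/y` for all `j`, `x` and `y > 0`,
where `φ_{j,i}(t) = φ(2^j t − i)`. -/
theorem stmt9 :
    ∃ C : ℝ, 0 < C ∧
      ∀ (φ : ℝ → ℝ), ContDiff ℝ 1 φ → Function.support φ ⊆ Set.Icc 0 1 →
        (∀ t, |φ t| ≤ 1) → (∫ t : ℝ, φ t) = 0 →
        ∀ (j : ℕ) (x y : ℝ), 0 < y →
          ∑ i ∈ Finset.range (2 ^ j),
              |∫ t : ℝ, φ ((2 : ℝ) ^ j * t - i) * poissonK y (x - t)|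
            ≤ C * (2 : ℝ) ^ (-(j : ℤ)) / y := by
  refine ⟨1, one_pos, ?_⟩
  intro φ hφ hsupp hbd hint j x y hy
  set c : ℝ := (2 : ℝ) ^ j with hc
  have hcpos : (0 : ℝ) < c := by positivity
  -- the function g and its properties
  set g : ℝ → ℝ := fun t => poissonK y (x - t) with hg
  have hgderiv : ∀ t : ℝ, HasDerivAt g (-(pd y (x - t))) t := by
    intro t
    have h1 : HasDerivAt (fun t : ℝ => x - t) (-1) t := (hasDerivAt_id t).const_sub x
    have h2 := (poissonK_hasDerivAt hy (x - t)).comp t h1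
    rw [mul_neg_one] at h2
    exact h2
  have hgcont : Continuous g := (poissonK_cont hy).comp (by continuity)
  -- the dominating function B
  set B : ℝ → ℝ := fun t => (Real.pi * (y ^ 2 + (x - t) ^ 2))⁻¹ with hB
  have hBcont : Continuous B := by
    apply Continuous.inv₀ (by continuity)
    intro t
    exact (denom_pos hy (x - t)).ne'
  have hBnonneg : ∀ t, 0 ≤ B t := fun t => (inv_nonneg).2 (denom_pos hy (x - t)).le
  have hBint : Integrable B := integrable_B hy x
  have hg'cont : Continuous (fun t : ℝ => -(pd y (x - t))) :=
    ((pd_cont hy).comp (by continuity)).neg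
  have hg'le : ∀ t, ‖-(pd y (x - t))‖ ≤ B t := by
    intro t
    rw [Real.norm_eq_abs, abs_neg]
    exact pd_bound hy (x - t)
  -- per-interval bound
  have key : ∀ i ∈ Finset.range (2 ^ j),
      |∫ t : ℝ, φ (c * t - i) * poissonK y (x - t)|
        ≤ (1 / c) * ∫ s in Ioc ((i : ℝ) / c) (((i : ℝ) + 1) / c), B s := by
    intro i _
    set a : ℝ := (i : ℝ) / c with ha
    set b : ℝ := ((i : ℝ) + 1) / c with hb2
    set M : ℝ := ∫ s in Ioc a b, B s with hM
    have hab : a ≤ b := by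
      rw [ha, hb2, div_le_div_iff_of_pos_right hcpos]
      linarith
    -- support of the rescaled bump
    have hsupp' : ∀ t : ℝ, t ∉ Icc a b → φ (c * t - i) = 0 := by
      intro t ht
      by_contra h
      have hmem : c * t - i ∈ Icc (0 : ℝ) 1 := hsupp (Function.mem_support.2 h)
      obtain ⟨h0, h1⟩ := hmem
      have hct := mul_comm c t
      refine ht ⟨?_, ?_⟩
      · rw [ha, div_le_iff₀ hcpos]; linarith
      · rw [hb2, le_div_iff₀ hcpos]; linarith
    have hφc : Continuous fun t : ℝ => φ (c * t - i) := hφ.continuous.comp (by continuity)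
    have hcompact : HasCompactSupport fun t : ℝ => φ (c * t - i) :=
      HasCompactSupport.intro isCompact_Icc hsupp'
    have hint2 : Integrable fun t : ℝ => φ (c * t - i) :=
      hφc.integrable_of_hasCompactSupport hcompact
    have hint1 : Integrable fun t : ℝ => φ (c * t - i) * g t :=
      (hφc.mul hgcont).integrable_of_hasCompactSupport (hcompact.mul_right)
    have hga_int : Integrable fun t : ℝ => φ (c * t - i) * g a := hint2.mul_const (g a)
    -- zero mean of the rescaled bump
    have hzero : (∫ t : ℝ, φ (c * t - i)) = 0 := by
      have e1 : (∫ t : ℝ, φ (c * t - i)) = ∫ t : ℝ, (fun u : ℝ => φ (u - i)) (c * t) := rfl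
      rw [e1, MeasureTheory.Measure.integral_comp_mul_left (fun u : ℝ => φ (u - (i : ℝ))) c,
        integral_sub_right_eq_self φ ((i : ℕ) : ℝ), hint, smul_zero]
    -- subtract the value at the left endpoint
    have hdiff : (∫ t : ℝ, φ (c * t - i) * poissonK y (x - t))
        = ∫ t : ℝ, φ (c * t - i) * (g t - g a) := by
      have e2 : (∫ t : ℝ, φ (c * t - i) * (g t - g a))
          = (∫ t : ℝ, φ (c * t - i) * g t) - ∫ t : ℝ, φ (c * t - i) * g a := by
        rw [← integral_sub hint1 hga_int]
        congr 1; ext t; ring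
      rw [e2, integral_mul_const, hzero, zero_mul, sub_zero]
    have hMnn : (0 : ℝ) ≤ M :=
      setIntegral_nonneg measurableSet_Ioc fun s _ => hBnonneg s
    -- FTC estimate
    have hgdiff_le : ∀ t ∈ Icc a b, |g t - g a| ≤ M := by
      rintro t ⟨hat, htb⟩
      have hftc : g t - g a = ∫ s in a..t, -(pd y (x - s)) :=
        (intervalIntegral.integral_eq_sub_of_hasDerivAt
          (fun s _ => hgderiv s) (hg'cont.intervalIntegrable a t)).symm
      rw [hftc]
      calc |∫ s in a..t, -(pd y (x - s))| ≤ ∫ s in a..t, |(-(pd y (x - s)))| :=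
            intervalIntegral.abs_integral_le_integral_abs hat
        _ = ∫ s in Ioc a t, |(-(pd y (x - s)))| := intervalIntegral.integral_of_le hat
        _ ≤ ∫ s in Ioc a t, B s := by
            apply setIntegral_mono_on
            · exact hg'cont.abs.integrableOn_Ioc
            · exact hBint.integrableOn
            · exact measurableSet_Ioc
            · intro s _
              simpa [Real.norm_eq_abs] using hg'le s
        _ ≤ M :=
            setIntegral_mono_set hBint.integrableOn
              (Filter.Eventually.of_forall fun s => hBnonneg s)
              (HasSubset.Subset.eventuallyLE (Ioc_subset_Ioc_right htb))
    have hmeas : (volume (Icc a b)).toReal = 1 / c := by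
      rw [Real.volume_Icc, show b - a = 1 / c by rw [ha, hb2]; field_simp; ring,
        ENNReal.toReal_ofReal (by positivity)]
    calc |∫ t : ℝ, φ (c * t - i) * poissonK y (x - t)|
        = |∫ t in Icc a b, φ (c * t - i) * (g t - g a)| := by
          rw [hdiff, setIntegral_eq_integral_of_forall_compl_eq_zero
            (fun t ht => by rw [hsupp' t ht, zero_mul])]
      _ ≤ M * (volume (Icc a b)).toReal := by
          rw [← Real.norm_eq_abs]
          apply norm_setIntegral_le_of_norm_le_const
            (by rw [Real.volume_Icc]; exact ENNReal.ofReal_lt_top)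
          intro t ht
          rw [Real.norm_eq_abs, abs_mul]
          calc |φ (c * t - i)| * |g t - g a| ≤ 1 * M :=
                mul_le_mul (hbd _) (hgdiff_le t ht) (abs_nonneg _) one_pos.le
            _ = M := one_mul M
      _ = (1 / c) * M := by rw [hmeas]; ring
  -- summing the set integrals of B over the dyadic intervals
  have haseq : ∀ i : ℕ, ((i : ℝ) / c) ≤ ((i : ℝ) + 1) / c := by
    intro i
    rw [div_le_div_iff_of_pos_right hcpos]
    linarith
  have hA : (∑ i ∈ Finset.range (2 ^ j), ∫ s in Ioc ((i : ℝ) / c) (((i : ℝ) + 1) / c), B s)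
      ≤ 1 / y := by
    have hadj := intervalIntegral.sum_integral_adjacent_intervals
      (a := fun k : ℕ => (k : ℝ) / c) (n := 2 ^ j)
      (fun k _ => hBcont.intervalIntegrable (μ := volume) _ _)
    have hsummand : ∀ i ∈ Finset.range (2 ^ j),
        (∫ s in Ioc ((i : ℝ) / c) (((i : ℝ) + 1) / c), B s)
          = ∫ s in ((i : ℝ) / c)..(((i + 1 : ℕ) : ℝ) / c), B s := by
      intro i _
      have hcast : (((i + 1 : ℕ) : ℝ) / c) = ((i : ℝ) + 1) / c := by push_cast; ring
      rw [hcast, intervalIntegral.integral_of_le (haseq i)]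
    rw [Finset.sum_congr rfl hsummand, hadj]
    have h0 : ((0 : ℕ) : ℝ) / c = 0 := by simp
    have h2 : (((2 ^ j : ℕ) : ℝ) / c) = 1 := by
      rw [hc]; push_cast; field_simp
    simp only [h0, h2]
    rw [intervalIntegral.integral_of_le zero_le_one]
    calc (∫ s in Ioc (0 : ℝ) 1, B s) ≤ ∫ s : ℝ, B s :=
          setIntegral_le_integral hBint (Filter.Eventually.of_forall fun s => hBnonneg s)
      _ = 1 / y := integral_B hy x
  -- put everything together
  calc ∑ i ∈ Finset.range (2 ^ j), |∫ t : ℝ, φ (c * t - i) * poissonK y (x - t)|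
      ≤ ∑ i ∈ Finset.range (2 ^ j),
          (1 / c) * ∫ s in Ioc ((i : ℝ) / c) (((i : ℝ) + 1) / c), B s :=
        Finset.sum_le_sum key
    _ = (1 / c) * ∑ i ∈ Finset.range (2 ^ j),
          ∫ s in Ioc ((i : ℝ) / c) (((i : ℝ) + 1) / c), B s := by
        rw [Finset.mul_sum]
    _ ≤ (1 / c) * (1 / y) :=
        mul_le_mul_of_nonneg_left hA (by positivity)
    _ = 1 * (2 : ℝ) ^ (-(j : ℤ)) / y := by
        rw [hc, one_mul, zpow_neg, zpow_natCast]
        field_simp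
end
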